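/- Let w_γ(x) = |x|^{−γ}, v_δ(x) = |x|^δ on ℝ^m with 1<p,q<∞. If the two-weight power-weight norm inequality (∫ (I_α f)^q |x|^{−γq} dx)^{1/q} ≤ N (∫ f^p |x|^{δp} dx)^{1/p} holds for all f ≥ 0 with N < ∞ and q < p, then a contradiction arises; hence p ≤ q is necessary for the power weighted norm inequality for I_α f = ∫|x−y|^{α−n}f(y)dy. -/

import Mathlib

open MeasureTheory ENNReal Set Pointwise

noncomputable section

abbrev E (m : ℕ) := EuclideanSpace ℝ (Fin m)


namespace SWaux

/-- scaling of lintegrals on Euclidean space -/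
lemma lint_scale {m : ℕ} {c : ℝ} (hc : 0 < c) (g : E m → ℝ≥0∞) (hg : Measurable g) :
    ∫⁻ x, g x = ENNReal.ofReal (c ^ (m : ℝ)) * ∫⁻ x, g (c • x) := by
  have h1 : ∫⁻ x, g (c • x) = ∫⁻ x, g x ∂(Measure.map (fun x : E m => c • x) volume) :=
    (lintegral_map hg (measurable_const_smul c)).symm
  rw [h1, Measure.map_addHaar_smul volume hc.ne', lintegral_smul_measure,
    finrank_euclideanSpace_fin, smul_eq_mul, ← mul_assoc, abs_of_nonneg (by positivity),
    ← Real.rpow_natCast c m, ← ENNReal.ofReal_mul (by positivity),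
    mul_inv_cancel₀ (by positivity), ENNReal.ofReal_one, one_mul]

lemma meas_ker {m : ℕ} (e : ℝ) :
    Measurable (fun p : E m × E m => (ENNReal.ofReal ‖p.1 - p.2‖) ^ e) :=
  ENNReal.continuous_rpow_const.measurable.comp
    (ENNReal.measurable_ofReal.comp (continuous_fst.sub continuous_snd).norm.measurable)

lemma meas_pw {m : ℕ} (r : ℝ) : Measurable (fun x : E m => (ENNReal.ofReal ‖x‖) ^ r) :=
  ENNReal.continuous_rpow_const.measurable.comp
    (ENNReal.measurable_ofReal.comp continuous_norm.measurable)

def ann (m : ℕ) : Set (E m) := Metric.closedBall 0 2 \ Metric.ball 0 1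

lemma ann_meas (m : ℕ) : MeasurableSet (ann m) :=
  measurableSet_closedBall.diff measurableSet_ball

lemma ann_norm {m : ℕ} {x : E m} (hx : x ∈ ann m) : 1 ≤ ‖x‖ ∧ ‖x‖ ≤ 2 := by
  obtain ⟨h1, h2⟩ := hx
  rw [Metric.mem_closedBall, dist_zero_right] at h1
  rw [Metric.mem_ball, dist_zero_right] at h2
  exact ⟨le_of_not_gt h2, h1⟩

lemma ann_pos {m : ℕ} (hm : 0 < m) : 0 < volume (ann m) := by
  haveI : Nontrivial (E m) := by
    apply Module.nontrivial_of_finrank_pos (R := ℝ)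
    rw [finrank_euclideanSpace_fin]; exact hm
  obtain ⟨x₀, hx₀⟩ := exists_norm_eq (E m) (by norm_num : (0:ℝ) ≤ 3/2)
  have hball : Metric.closedBall x₀ (1/2 : ℝ) ⊆ ann m := by
    intro y hy
    have hd : ‖y - x₀‖ ≤ 1/2 := by
      rw [Metric.mem_closedBall, dist_eq_norm] at hy; exact hy
    have hub : ‖y‖ ≤ 2 := by
      calc ‖y‖ = ‖x₀ + (y - x₀)‖ := by rw [add_sub_cancel]
        _ ≤ ‖x₀‖ + ‖y - x₀‖ := norm_add_le _ _
        _ ≤ 2 := by rw [hx₀]; linarith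
    have hlb : 1 ≤ ‖y‖ := by
      have := norm_sub_norm_le y x₀
      have h2 : ‖x₀‖ - ‖y - x₀‖ ≤ ‖y‖ := by
        have := abs_norm_sub_norm_le y x₀
        have h3 : ‖x₀‖ - ‖y‖ ≤ |‖y‖ - ‖x₀‖| := by
          rw [abs_sub_comm]; exact le_abs_self _
        linarith [le_abs_self (‖y‖ - ‖x₀‖), abs_norm_sub_norm_le y x₀]
      rw [hx₀] at h2; linarith
    constructor
    · rw [Metric.mem_closedBall, dist_zero_right]; exact hub
    · rw [Metric.mem_ball, dist_zero_right]; push_neg; exact hlb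
  calc (0:ℝ≥0∞) < volume (Metric.closedBall x₀ (1/2 : ℝ)) :=
        Metric.measure_closedBall_pos volume x₀ (by norm_num)
    _ ≤ volume (ann m) := measure_mono hball

lemma ann_fin (m : ℕ) : volume (ann m) < ∞ :=
  lt_of_le_of_lt (measure_mono diff_subset) measure_closedBall_lt_top

lemma smul_ann_meas {m : ℕ} {c : ℝ} (hc : c ≠ 0) : MeasurableSet (c • ann m) := by
  have : c • ann m = (fun x : E m => c⁻¹ • x) ⁻¹' (ann m) := by
    ext x; rw [Set.mem_smul_set_iff_inv_smul_mem₀ hc, Set.mem_preimage]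
  rw [this]
  exact (ann_meas m).preimage (measurable_const_smul _)

lemma smul_ann_norm {m : ℕ} {c : ℝ} (hc : 0 < c) {x : E m} (hx : x ∈ c • ann m) :
    c ≤ ‖x‖ ∧ ‖x‖ ≤ 2 * c := by
  obtain ⟨y, hy, rfl⟩ := hx
  obtain ⟨h1, h2⟩ := ann_norm hy
  rw [norm_smul, Real.norm_eq_abs, abs_of_pos hc]
  constructor <;> nlinarith


noncomputable def kerf (m : ℕ) (α : ℝ) (x y : E m) : ℝ≥0∞ :=
  (ENNReal.ofReal ‖x - y‖) ^ (α - (m : ℝ))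

noncomputable def inn (m : ℕ) (α : ℝ) (c : ℝ) (x : E m) : ℝ≥0∞ :=
  ∫⁻ y in c • ann m, kerf m α x y

lemma kerf_meas_left (m : ℕ) (α : ℝ) (x : E m) : Measurable (fun y => kerf m α x y) := by
  unfold kerf
  exact ENNReal.continuous_rpow_const.measurable.comp
    (ENNReal.measurable_ofReal.comp (continuous_const.sub continuous_id).norm.measurable)

lemma inn_meas (m : ℕ) (α : ℝ) {c : ℝ} (hc : c ≠ 0) : Measurable (inn m α c) := by
  have h : inn m α c = fun x => ∫⁻ y, (fun p : E m × E m =>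
      kerf m α p.1 p.2 * (c • ann m).indicator (fun _ => (1:ℝ≥0∞)) p.2) (x, y) := by
    funext x
    show (∫⁻ y in c • ann m, kerf m α x y) = _
    rw [← lintegral_indicator (smul_ann_meas hc)]
    congr 1; funext y
    by_cases h : y ∈ c • ann m <;> simp [Set.indicator, h]
  rw [h]
  exact Measurable.lintegral_prod_right'
    ((meas_ker _).mul ((measurable_const.indicator (smul_ann_meas hc)).comp measurable_snd))

lemma inn_scale (m : ℕ) (α : ℝ) {c : ℝ} (hc : 0 < c) (x : E m) :
    inn m α c (c • x) = ENNReal.ofReal (c ^ α) * inn m α 1 x := by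
  have hg : Measurable fun y => (c • ann m).indicator (fun y => kerf m α (c • x) y) y :=
    (kerf_meas_left m α _).indicator (smul_ann_meas hc.ne')
  rw [show inn m α c (c • x) = ∫⁻ y, (c • ann m).indicator (fun y => kerf m α (c • x) y) y from
    (lintegral_indicator (smul_ann_meas hc.ne') _).symm]
  rw [lint_scale hc _ hg]
  have hpt : ∀ y : E m, (c • ann m).indicator (fun y => kerf m α (c • x) y) (c • y)
      = (ann m).indicator (fun y => ENNReal.ofReal (c ^ (α - (m:ℝ))) * kerf m α x y) y := by
    intro y
    by_cases h : y ∈ ann m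
    · rw [Set.indicator_of_mem h, Set.indicator_of_mem (Set.smul_mem_smul_set h)]
      show (ENNReal.ofReal ‖c • x - c • y‖) ^ (α - (m:ℝ)) = _
      rw [← smul_sub, norm_smul, Real.norm_eq_abs, abs_of_pos hc,
        ENNReal.ofReal_mul hc.le,
        ENNReal.mul_rpow_of_ne_top ENNReal.ofReal_ne_top ENNReal.ofReal_ne_top,
        ENNReal.ofReal_rpow_of_pos hc]
      rfl
    · rw [Set.indicator_of_notMem h, Set.indicator_of_notMem]
      intro hmem
      exact h ((Set.smul_mem_smul_set_iff₀ hc.ne' _ _).mp hmem)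
  simp_rw [hpt]
  rw [lintegral_indicator (ann_meas m),
    lintegral_const_mul' _ _ ENNReal.ofReal_ne_top, ← mul_assoc,
    ← ENNReal.ofReal_mul (by positivity), ← Real.rpow_add hc]
  have h1 : (1:ℝ) • ann m = ann m := one_smul ℝ _
  rw [show (m:ℝ) + (α - (m:ℝ)) = α by ring]
  unfold inn
  rw [h1]

noncomputable def Phi (m : ℕ) (α γ q : ℝ) (c : ℝ) : ℝ≥0∞ :=
  ∫⁻ x in c • ann m, (inn m α c x * (ENNReal.ofReal ‖x‖) ^ (-γ)) ^ q

noncomputable def Psi (m : ℕ) (δ p : ℝ) (c : ℝ) : ℝ≥0∞ :=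
  ∫⁻ x in c • ann m, ((ENNReal.ofReal ‖x‖) ^ δ) ^ p

lemma Psi_scale (m : ℕ) (δ p : ℝ) (hp : 0 ≤ p) {c : ℝ} (hc : 0 < c) :
    Psi m δ p c = ENNReal.ofReal (c ^ (δ * p + m)) * Psi m δ p 1 := by
  have hg : Measurable fun x : E m =>
      (c • ann m).indicator (fun x => ((ENNReal.ofReal ‖x‖) ^ δ) ^ p) x :=
    (ENNReal.continuous_rpow_const.measurable.comp (meas_pw δ)).indicator (smul_ann_meas hc.ne')
  rw [show Psi m δ p c
      = ∫⁻ x, (c • ann m).indicator (fun x => ((ENNReal.ofReal ‖x‖) ^ δ) ^ p) x from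
    (lintegral_indicator (smul_ann_meas hc.ne') _).symm]
  rw [lint_scale hc _ hg]
  have hpt : ∀ x : E m, (c • ann m).indicator (fun x => ((ENNReal.ofReal ‖x‖) ^ δ) ^ p) (c • x)
      = (ann m).indicator (fun x => ENNReal.ofReal (c ^ (δ * p))
          * ((ENNReal.ofReal ‖x‖) ^ δ) ^ p) x := by
    intro x
    by_cases h : x ∈ ann m
    · rw [Set.indicator_of_mem h, Set.indicator_of_mem (Set.smul_mem_smul_set h)]
      rw [norm_smul, Real.norm_eq_abs, abs_of_pos hc, ENNReal.ofReal_mul hc.le,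
        ENNReal.mul_rpow_of_ne_top ENNReal.ofReal_ne_top ENNReal.ofReal_ne_top,
        ENNReal.mul_rpow_of_nonneg _ _ hp, ENNReal.ofReal_rpow_of_pos hc,
        ENNReal.ofReal_rpow_of_pos (Real.rpow_pos_of_pos hc δ), ← Real.rpow_mul hc.le]
    · rw [Set.indicator_of_notMem h, Set.indicator_of_notMem]
      intro hmem
      exact h ((Set.smul_mem_smul_set_iff₀ hc.ne' _ _).mp hmem)
  simp_rw [hpt]
  rw [lintegral_indicator (ann_meas m),
    lintegral_const_mul' _ _ ENNReal.ofReal_ne_top, ← mul_assoc,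
    ← ENNReal.ofReal_mul (by positivity), ← Real.rpow_add hc]
  have h1 : (1:ℝ) • ann m = ann m := one_smul ℝ _
  rw [show (m:ℝ) + δ * p = δ * p + m by ring]
  unfold Psi
  rw [h1]

lemma Phi_scale (m : ℕ) (α γ q : ℝ) (hq : 0 ≤ q) {c : ℝ} (hc : 0 < c) :
    Phi m α γ q c = ENNReal.ofReal (c ^ ((α - γ) * q + m)) * Phi m α γ q 1 := by
  have hg : Measurable fun x : E m =>
      (c • ann m).indicator (fun x => (inn m α c x * (ENNReal.ofReal ‖x‖) ^ (-γ)) ^ q) x :=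
    (ENNReal.continuous_rpow_const.measurable.comp
      ((inn_meas m α hc.ne').mul (meas_pw (-γ)))).indicator (smul_ann_meas hc.ne')
  rw [show Phi m α γ q c
      = ∫⁻ x, (c • ann m).indicator (fun x => (inn m α c x * (ENNReal.ofReal ‖x‖) ^ (-γ)) ^ q) x
    from (lintegral_indicator (smul_ann_meas hc.ne') _).symm]
  rw [lint_scale hc _ hg]
  have hpt : ∀ x : E m,
      (c • ann m).indicator (fun x => (inn m α c x * (ENNReal.ofReal ‖x‖) ^ (-γ)) ^ q) (c • x)
      = (ann m).indicator (fun x => ENNReal.ofReal (c ^ ((α - γ) * q))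
          * (inn m α 1 x * (ENNReal.ofReal ‖x‖) ^ (-γ)) ^ q) x := by
    intro x
    by_cases h : x ∈ ann m
    · rw [Set.indicator_of_mem h, Set.indicator_of_mem (Set.smul_mem_smul_set h)]
      rw [inn_scale m α hc x, norm_smul, Real.norm_eq_abs, abs_of_pos hc,
        ENNReal.ofReal_mul hc.le,
        ENNReal.mul_rpow_of_ne_top ENNReal.ofReal_ne_top ENNReal.ofReal_ne_top,
        ENNReal.ofReal_rpow_of_pos hc]
      rw [mul_mul_mul_comm, ← ENNReal.ofReal_mul (by positivity), ← Real.rpow_add hc,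
        ENNReal.mul_rpow_of_nonneg _ _ hq,
        ENNReal.ofReal_rpow_of_pos (Real.rpow_pos_of_pos hc _), ← Real.rpow_mul hc.le,
        show α + -γ = α - γ by ring]
    · rw [Set.indicator_of_notMem h, Set.indicator_of_notMem]
      intro hmem
      exact h ((Set.smul_mem_smul_set_iff₀ hc.ne' _ _).mp hmem)
  simp_rw [hpt]
  rw [lintegral_indicator (ann_meas m),
    lintegral_const_mul' _ _ ENNReal.ofReal_ne_top, ← mul_assoc,
    ← ENNReal.ofReal_mul (by positivity), ← Real.rpow_add hc]
  have h1 : (1:ℝ) • ann m = ann m := one_smul ℝ _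
  rw [show (m:ℝ) + (α - γ) * q = (α - γ) * q + m by ring]
  unfold Phi
  rw [h1]


lemma Psi_one_fin (m : ℕ) (δ p : ℝ) : Psi m δ p 1 < ∞ := by
  have h1 : (1:ℝ) • ann m = ann m := one_smul ℝ _
  unfold Psi
  rw [h1]
  have hb : ∀ x ∈ ann m, ((ENNReal.ofReal ‖x‖) ^ δ) ^ p ≤ (2:ℝ≥0∞) ^ |δ * p| := by
    intro x hx
    rw [← ENNReal.rpow_mul]
    have hb1 : 1 ≤ ENNReal.ofReal ‖x‖ := ENNReal.one_le_ofReal.mpr (ann_norm hx).1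
    have hb2 : ENNReal.ofReal ‖x‖ ≤ 2 := by
      calc ENNReal.ofReal ‖x‖ ≤ ENNReal.ofReal 2 := ENNReal.ofReal_le_ofReal (ann_norm hx).2
        _ = 2 := by norm_num
    calc (ENNReal.ofReal ‖x‖) ^ (δ * p) ≤ (ENNReal.ofReal ‖x‖) ^ |δ * p| :=
          ENNReal.rpow_le_rpow_of_exponent_le hb1 (le_abs_self _)
      _ ≤ (2:ℝ≥0∞) ^ |δ * p| := ENNReal.rpow_le_rpow hb2 (abs_nonneg _)
  calc ∫⁻ x in ann m, ((ENNReal.ofReal ‖x‖) ^ δ) ^ p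
      ≤ ∫⁻ _x in ann m, (2:ℝ≥0∞) ^ |δ * p| := setLIntegral_mono measurable_const hb
    _ = (2:ℝ≥0∞) ^ |δ * p| * volume (ann m) := setLIntegral_const _ _
    _ < ∞ := ENNReal.mul_lt_top
        (ENNReal.rpow_lt_top_of_nonneg (abs_nonneg _) (by norm_num)) (ann_fin m)

lemma Phi_one_pos (m : ℕ) (hm : 0 < m) (α γ : ℝ) {q : ℝ} (hq : 0 < q) :
    0 < Phi m α γ q 1 := by
  haveI : Nontrivial (E m) := by
    apply Module.nontrivial_of_finrank_pos (R := ℝ)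
    rw [finrank_euclideanSpace_fin]; exact hm
  have h1 : (1:ℝ) • ann m = ann m := one_smul ℝ _
  have hinn : ∀ x : E m, 0 < inn m α 1 x := by
    intro x
    unfold inn
    rw [h1, lintegral_pos_iff_support (kerf_meas_left m α x)]
    have hsub : ann m \ {x} ⊆ Function.support fun y => kerf m α x y := by
      rintro y ⟨hy, hxy⟩
      simp only [Function.mem_support]
      unfold kerf
      rw [Ne, ENNReal.rpow_eq_zero_iff]
      rintro (⟨h0, -⟩ | ⟨htop, -⟩)
      · have : (0:ℝ) < ‖x - y‖ := by
          rw [norm_sub_pos_iff]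
          intro hxeq
          exact hxy (by simp [hxeq.symm])
        exact (ENNReal.ofReal_pos.mpr this).ne' h0
      · exact ENNReal.ofReal_ne_top htop
    calc (0:ℝ≥0∞) < volume (ann m) := ann_pos hm
      _ = volume (ann m \ {x}) := (measure_diff_null (measure_singleton x)).symm
      _ = (volume.restrict (ann m)) (ann m \ {x}) := by
          rw [Measure.restrict_apply ((ann_meas m).diff (measurableSet_singleton x)),
            Set.inter_eq_self_of_subset_left Set.diff_subset]
      _ ≤ (volume.restrict (ann m)) (Function.support fun y => kerf m α x y) :=
          measure_mono hsub
  have hF : Measurable fun x : E m => (inn m α 1 x * (ENNReal.ofReal ‖x‖) ^ (-γ)) ^ q :=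
    ENNReal.continuous_rpow_const.measurable.comp
      ((inn_meas m α one_ne_zero).mul (meas_pw (-γ)))
  unfold Phi
  rw [h1, lintegral_pos_iff_support hF]
  have hsub : ann m ⊆ Function.support
      fun x => (inn m α 1 x * (ENNReal.ofReal ‖x‖) ^ (-γ)) ^ q := by
    intro x hx
    simp only [Function.mem_support]
    rw [Ne, ENNReal.rpow_eq_zero_iff]
    rintro (⟨h0, -⟩ | ⟨-, hlt⟩)
    · rcases mul_eq_zero.mp h0 with h | h
      · exact (hinn x).ne' h
      · rw [ENNReal.rpow_eq_zero_iff] at h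
        rcases h with ⟨h2, -⟩ | ⟨h2, -⟩
        · have : 1 ≤ ENNReal.ofReal ‖x‖ := ENNReal.one_le_ofReal.mpr (ann_norm hx).1
          rw [h2] at this
          exact absurd this (by norm_num)
        · exact ENNReal.ofReal_ne_top h2
    · exact absurd hlt (not_lt.mpr hq.le)
  calc (0:ℝ≥0∞) < volume (ann m) := ann_pos hm
    _ = (volume.restrict (ann m)) (ann m) := (Measure.restrict_apply_self _ _).symm
    _ ≤ _ := measure_mono hsub

end SWaux

/-- **Necessity of `p ≤ q` in the Stein–Weiss power weight inequality.**  Let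
`w_γ(x) = |x|^{−γ}`, `v_δ(x) = |x|^{δ}` on `ℝ^m`, `1 < p, q < ∞`.  If the two-weight
power-weight norm inequality
`(∫ (I_α f)^q |x|^{−γq} dx)^{1/q} ≤ N (∫ f^p |x|^{δp} dx)^{1/p}` holds for all `f ≥ 0` with a
finite constant `N`, and `q < p`, then a contradiction arises. -/
theorem stein_weiss_p_le_q_necessary (m : ℕ) (hm : 0 < m) (p q α γ δ : ℝ)
    (hp : 1 < p) (hq : 1 < q)
    (N : ℝ≥0∞) (hN : N ≠ ∞)
    (hineq : ∀ f : E m → ℝ≥0∞, Measurable f →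
      (∫⁻ x, ((∫⁻ y, (ENNReal.ofReal ‖x - y‖) ^ (α - (m : ℝ)) * f y) *
            (ENNReal.ofReal ‖x‖) ^ (-γ)) ^ q) ^ (1 / q)
        ≤ N * (∫⁻ x, (f x * (ENNReal.ofReal ‖x‖) ^ δ) ^ p) ^ (1 / p))
    (hqp : q < p) : False := by
  classical
  have hq0 : 0 < q := lt_trans one_pos hq
  have hp0 : 0 < p := lt_trans one_pos hp
  have hq0' : (0:ℝ) ≤ 1/q := by positivity
  have hp0' : (0:ℝ) ≤ 1/p := by positivity
  -- single-bump form of the hypothesis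
  have single : ∀ c : ℝ, 0 < c →
      (SWaux.Phi m α γ q c) ^ (1/q) ≤ N * (SWaux.Psi m δ p c) ^ (1/p) := by
    intro c hc
    have hfm : Measurable ((c • SWaux.ann m).indicator (fun _ => (1:ℝ≥0∞))) :=
      measurable_const.indicator (SWaux.smul_ann_meas hc.ne')
    have h := hineq _ hfm
    have hinner : ∀ x : E m, (∫⁻ y, (ENNReal.ofReal ‖x - y‖) ^ (α - (m:ℝ)) *
        (c • SWaux.ann m).indicator (fun _ => (1:ℝ≥0∞)) y) = SWaux.inn m α c x := by
      intro x
      have hy : ∀ y : E m, (ENNReal.ofReal ‖x - y‖) ^ (α - (m:ℝ)) *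
          (c • SWaux.ann m).indicator (fun _ => (1:ℝ≥0∞)) y
          = (c • SWaux.ann m).indicator (fun y => SWaux.kerf m α x y) y := by
        intro y
        by_cases hy : y ∈ c • SWaux.ann m <;> simp [Set.indicator, hy, SWaux.kerf]
      simp_rw [hy]
      exact lintegral_indicator (SWaux.smul_ann_meas hc.ne') _
    simp_rw [hinner] at h
    have hrhs : (∫⁻ x, ((c • SWaux.ann m).indicator (fun _ => (1:ℝ≥0∞)) x *
        (ENNReal.ofReal ‖x‖) ^ δ) ^ p) = SWaux.Psi m δ p c := by
      have hx' : ∀ x : E m, ((c • SWaux.ann m).indicator (fun _ => (1:ℝ≥0∞)) x *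
          (ENNReal.ofReal ‖x‖) ^ δ) ^ p
          = (c • SWaux.ann m).indicator (fun x => ((ENNReal.ofReal ‖x‖) ^ δ) ^ p) x := by
        intro x
        by_cases hx : x ∈ c • SWaux.ann m
        · simp [Set.indicator, hx]
        · simp [Set.indicator, hx, ENNReal.zero_rpow_of_pos hp0]
      simp_rw [hx']
      exact lintegral_indicator (SWaux.smul_ann_meas hc.ne') _
    rw [hrhs] at h
    refine le_trans ?_ h
    apply ENNReal.rpow_le_rpow _ hq0'
    exact lintegral_mono' Measure.restrict_le_self le_rfl
  set P := (SWaux.Phi m α γ q 1) ^ (1/q) with hPdef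
  set C := N * (SWaux.Psi m δ p 1) ^ (1/p) with hCdef
  have hC : C ≠ ∞ :=
    ENNReal.mul_ne_top hN (ENNReal.rpow_ne_top_of_nonneg hp0' (SWaux.Psi_one_fin m δ p).ne)
  have hPC : P ≤ C := single 1 one_pos
  have hPfin : P ≠ ∞ := by
    intro h; rw [h] at hPC; exact hC (top_le_iff.mp hPC)
  have hP0 : P ≠ 0 := by
    rw [hPdef, Ne, ENNReal.rpow_eq_zero_iff]
    rintro (⟨h0, -⟩ | ⟨-, hlt⟩)
    · exact (SWaux.Phi_one_pos m hm α γ hq0).ne' h0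
    · have : (0:ℝ) < 1/q := by positivity
      linarith
  have hPt : 0 < P.toReal := ENNReal.toReal_pos hP0 hPfin
  set u₀ : ℝ := (C.toReal + 1) / P.toReal with hu₀def
  have hu₀ : 0 < u₀ := by positivity
  have hfalse : ENNReal.ofReal u₀ * P ≤ C → False := by
    intro h
    have h2 : ENNReal.ofReal u₀ * P = ENNReal.ofReal (C.toReal + 1) := by
      conv_lhs => rw [← ENNReal.ofReal_toReal hPfin]
      rw [← ENNReal.ofReal_mul hu₀.le, hu₀def, div_mul_cancel₀ _ hPt.ne']
    rw [h2] at h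
    have h3 : C < ENNReal.ofReal (C.toReal + 1) := by
      conv_lhs => rw [← ENNReal.ofReal_toReal hC]
      exact (ENNReal.ofReal_lt_ofReal_iff (by positivity)).mpr (by linarith)
    exact absurd h (not_le.mpr h3)
  have hdiv : ∀ c A' B' : ℝ, 0 < c →
      ENNReal.ofReal (c ^ A') * P ≤ ENNReal.ofReal (c ^ B') * C →
      ENNReal.ofReal (c ^ (A' - B')) * P ≤ C := by
    intro c A' B' hc h
    have h4 := mul_le_mul_right h (ENNReal.ofReal (c ^ (-B')))
    rw [← mul_assoc, ← mul_assoc, ← ENNReal.ofReal_mul (by positivity),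
      ← ENNReal.ofReal_mul (by positivity), ← Real.rpow_add hc, ← Real.rpow_add hc,
      neg_add_cancel, Real.rpow_zero, ENNReal.ofReal_one, one_mul,
      show -B' + A' = A' - B' by ring] at h4
    exact h4
  have key : ∀ c : ℝ, 0 < c →
      ENNReal.ofReal (c ^ (α - γ + (m:ℝ)/q)) * P ≤ ENNReal.ofReal (c ^ (δ + (m:ℝ)/p)) * C := by
    intro c hc
    have h := single c hc
    rw [SWaux.Phi_scale m α γ q hq0.le hc, SWaux.Psi_scale m δ p hp0.le hc,
      ENNReal.mul_rpow_of_nonneg _ _ hq0', ENNReal.mul_rpow_of_nonneg _ _ hp0',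
      ENNReal.ofReal_rpow_of_pos (by positivity), ENNReal.ofReal_rpow_of_pos (by positivity),
      ← Real.rpow_mul hc.le, ← Real.rpow_mul hc.le,
      show ((α - γ) * q + (m:ℝ)) * (1/q) = α - γ + (m:ℝ)/q by field_simp,
      show (δ * p + (m:ℝ)) * (1/p) = δ + (m:ℝ)/p by field_simp,
      ← mul_assoc, mul_comm N (ENNReal.ofReal _), mul_assoc] at h
    exact h
  by_cases hAB : α - γ + (m:ℝ)/q = δ + (m:ℝ)/p
  · -- balanced case: many bumps, uses q < p
    set s : ℝ := -(δ + (m:ℝ)/p) with hsdef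
    set t : ℕ → ℝ := fun k => 3 ^ k with htdef
    have ht : ∀ k, 0 < t k := fun k => by positivity
    have hdisj : ∀ j k : ℕ, j < k → ∀ x : E m,
        x ∈ t j • SWaux.ann m → x ∈ t k • SWaux.ann m → False := by
      intro j k hjk x hxj hxk
      obtain ⟨-, h2⟩ := SWaux.smul_ann_norm (ht j) hxj
      obtain ⟨h3, -⟩ := SWaux.smul_ann_norm (ht k) hxk
      have h4 : (3:ℝ) ^ (j+1) ≤ 3 ^ k := by
        apply pow_le_pow_right₀ (by norm_num) (by omega)
      simp only [htdef] at h2 h3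
      have h5 : (3:ℝ) ^ (j+1) = 3 * 3 ^ j := by ring
      nlinarith [pow_pos (show (0:ℝ) < 3 by norm_num) j]
    have hε : 0 < 1/q - 1/p := by
      have : 1/p < 1/q := one_div_lt_one_div_of_lt hq0 hqp
      linarith
    obtain ⟨n, hn⟩ := exists_nat_ge (max 1 (u₀ ^ (1/q - 1/p)⁻¹))
    have hn1 : (1:ℝ) ≤ n := le_trans (le_max_left _ _) hn
    have hn2 : u₀ ^ (1/q - 1/p)⁻¹ ≤ n := le_trans (le_max_right _ _) hn
    have hnpos : (0:ℝ) < n := by linarith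
    set f : E m → ℝ≥0∞ := fun y => ∑ k ∈ Finset.range n,
      (t k • SWaux.ann m).indicator (fun _ => ENNReal.ofReal (t k ^ s)) y with hfdef
    have hfmeas : Measurable f :=
      Finset.measurable_sum _
        (fun k _ => measurable_const.indicator (SWaux.smul_ann_meas (ht k).ne'))
    have huniq : ∀ (j : ℕ) (x : E m), x ∈ t j • SWaux.ann m →
        ∀ i : ℕ, i ≠ j → x ∉ t i • SWaux.ann m := by
      intro j x hxj i hij hxi
      rcases lt_or_gt_of_ne hij with h | h
      · exact hdisj i j h x hxi hxj
      · exact hdisj j i h x hxj hxi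
    have hRHS : (∫⁻ x, (f x * (ENNReal.ofReal ‖x‖) ^ δ) ^ p)
        = (n : ℝ≥0∞) * SWaux.Psi m δ p 1 := by
      have hpt : ∀ x : E m, (f x * (ENNReal.ofReal ‖x‖) ^ δ) ^ p
          = ∑ k ∈ Finset.range n, (t k • SWaux.ann m).indicator
              (fun x => (ENNReal.ofReal (t k ^ s) * (ENNReal.ofReal ‖x‖) ^ δ) ^ p) x := by
        intro x
        by_cases hx : ∃ j ∈ Finset.range n, x ∈ t j • SWaux.ann m
        · obtain ⟨j, hj, hxj⟩ := hx
          have hfx : f x = ENNReal.ofReal (t j ^ s) := by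
            simp only [hfdef]
            rw [Finset.sum_eq_single j]
            · exact Set.indicator_of_mem hxj _
            · intro i _ hij
              exact Set.indicator_of_notMem (huniq j x hxj i hij) _
            · intro hj'; exact absurd hj hj'
          rw [hfx, Finset.sum_eq_single j]
          · rw [Set.indicator_of_mem hxj]
          · intro i _ hij
            exact Set.indicator_of_notMem (huniq j x hxj i hij) _
          · intro hj'; exact absurd hj hj'
        · push_neg at hx
          have hfx : f x = 0 := by
            simp only [hfdef]
            exact Finset.sum_eq_zero (fun i hi => Set.indicator_of_notMem (hx i hi) _)
          rw [hfx, zero_mul, ENNReal.zero_rpow_of_pos hp0]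
          exact (Finset.sum_eq_zero (fun i hi => Set.indicator_of_notMem (hx i hi) _)).symm
      simp_rw [hpt]
      have hmeas1 : ∀ k ∈ Finset.range n, Measurable fun x : E m =>
          (t k • SWaux.ann m).indicator
            (fun x => (ENNReal.ofReal (t k ^ s) * (ENNReal.ofReal ‖x‖) ^ δ) ^ p) x :=
        fun k _ => Measurable.indicator
          (ENNReal.continuous_rpow_const.measurable.comp
            (measurable_const.mul (SWaux.meas_pw δ))) (SWaux.smul_ann_meas (ht k).ne')
      rw [lintegral_finset_sum _ hmeas1]
      have hterm : ∀ k, (∫⁻ x, (t k • SWaux.ann m).indicator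
          (fun x => (ENNReal.ofReal (t k ^ s) * (ENNReal.ofReal ‖x‖) ^ δ) ^ p) x)
          = SWaux.Psi m δ p 1 := by
        intro k
        rw [lintegral_indicator (SWaux.smul_ann_meas (ht k).ne')]
        have hpt2 : ∀ x : E m, (ENNReal.ofReal (t k ^ s) * (ENNReal.ofReal ‖x‖) ^ δ) ^ p
            = ENNReal.ofReal (t k ^ (s * p)) * ((ENNReal.ofReal ‖x‖) ^ δ) ^ p := by
          intro x
          rw [ENNReal.mul_rpow_of_nonneg _ _ hp0.le,
            ENNReal.ofReal_rpow_of_pos (Real.rpow_pos_of_pos (ht k) s),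
            ← Real.rpow_mul (ht k).le]
        simp_rw [hpt2]
        rw [lintegral_const_mul' _ _ ENNReal.ofReal_ne_top,
          show (∫⁻ x in t k • SWaux.ann m, ((ENNReal.ofReal ‖x‖) ^ δ) ^ p)
            = SWaux.Psi m δ p (t k) from rfl,
          SWaux.Psi_scale m δ p hp0.le (ht k), ← mul_assoc,
          ← ENNReal.ofReal_mul (by positivity), ← Real.rpow_add (ht k),
          show s * p + (δ * p + (m:ℝ)) = 0 by rw [hsdef]; field_simp; ring,
          Real.rpow_zero, ENNReal.ofReal_one, one_mul]
      simp_rw [hterm]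
      rw [Finset.sum_const, Finset.card_range, nsmul_eq_mul]
    have hLHS : (n : ℝ≥0∞) * SWaux.Phi m α γ q 1
        ≤ ∫⁻ x, ((∫⁻ y, (ENNReal.ofReal ‖x - y‖) ^ (α - (m:ℝ)) * f y)
            * (ENNReal.ofReal ‖x‖) ^ (-γ)) ^ q := by
      have hstep : ∀ x : E m, (∑ k ∈ Finset.range n, (t k • SWaux.ann m).indicator
            (fun x => (ENNReal.ofReal (t k ^ s) * SWaux.inn m α (t k) x
              * (ENNReal.ofReal ‖x‖) ^ (-γ)) ^ q) x)
          ≤ ((∫⁻ y, (ENNReal.ofReal ‖x - y‖) ^ (α - (m:ℝ)) * f y)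
              * (ENNReal.ofReal ‖x‖) ^ (-γ)) ^ q := by
        intro x
        by_cases hx : ∃ j ∈ Finset.range n, x ∈ t j • SWaux.ann m
        · obtain ⟨j, hj, hxj⟩ := hx
          rw [Finset.sum_eq_single j]
          · rw [Set.indicator_of_mem hxj]
            apply ENNReal.rpow_le_rpow _ hq0.le
            apply mul_le_mul' _ le_rfl
            have hlow : ∀ y : E m, (t j • SWaux.ann m).indicator
                (fun y => ENNReal.ofReal (t j ^ s) * SWaux.kerf m α x y) y
                ≤ (ENNReal.ofReal ‖x - y‖) ^ (α - (m:ℝ)) * f y := by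
              intro y
              by_cases hy : y ∈ t j • SWaux.ann m
              · rw [Set.indicator_of_mem hy, mul_comm]
                apply mul_le_mul' le_rfl
                calc ENNReal.ofReal (t j ^ s)
                    = (t j • SWaux.ann m).indicator
                        (fun _ => ENNReal.ofReal (t j ^ s)) y :=
                      (Set.indicator_of_mem hy (fun _ => ENNReal.ofReal (t j ^ s))).symm
                  _ ≤ f y := by
                      simp only [hfdef]
                      exact Finset.single_le_sum
                        (f := fun i => (t i • SWaux.ann m).indicator
                          (fun _ => ENNReal.ofReal (t i ^ s)) y)
                        (fun i _ => zero_le) hj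
              · rw [Set.indicator_of_notMem hy]; exact zero_le
            calc ENNReal.ofReal (t j ^ s) * SWaux.inn m α (t j) x
                = ∫⁻ y, (t j • SWaux.ann m).indicator
                    (fun y => ENNReal.ofReal (t j ^ s) * SWaux.kerf m α x y) y := by
                  rw [lintegral_indicator (SWaux.smul_ann_meas (ht j).ne'),
                    lintegral_const_mul' _ _ ENNReal.ofReal_ne_top]
                  rfl
              _ ≤ ∫⁻ y, (ENNReal.ofReal ‖x - y‖) ^ (α - (m:ℝ)) * f y := lintegral_mono hlow
          · intro i _ hij
            exact Set.indicator_of_notMem (huniq j x hxj i hij) _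
          · intro hj'; exact absurd hj hj'
        · push_neg at hx
          rw [Finset.sum_eq_zero (fun i hi => Set.indicator_of_notMem (hx i hi) _)]
          exact zero_le
      have hterm : ∀ k, (∫⁻ x, (t k • SWaux.ann m).indicator
          (fun x => (ENNReal.ofReal (t k ^ s) * SWaux.inn m α (t k) x
            * (ENNReal.ofReal ‖x‖) ^ (-γ)) ^ q) x) = SWaux.Phi m α γ q 1 := by
        intro k
        rw [lintegral_indicator (SWaux.smul_ann_meas (ht k).ne')]
        have hpt3 : ∀ x : E m, (ENNReal.ofReal (t k ^ s) * SWaux.inn m α (t k) x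
            * (ENNReal.ofReal ‖x‖) ^ (-γ)) ^ q
            = ENNReal.ofReal (t k ^ (s * q)) *
              (SWaux.inn m α (t k) x * (ENNReal.ofReal ‖x‖) ^ (-γ)) ^ q := by
          intro x
          rw [mul_assoc, ENNReal.mul_rpow_of_nonneg _ _ hq0.le,
            ENNReal.ofReal_rpow_of_pos (Real.rpow_pos_of_pos (ht k) s),
            ← Real.rpow_mul (ht k).le]
        simp_rw [hpt3]
        rw [lintegral_const_mul' _ _ ENNReal.ofReal_ne_top,
          show (∫⁻ x in t k • SWaux.ann m, (SWaux.inn m α (t k) x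
            * (ENNReal.ofReal ‖x‖) ^ (-γ)) ^ q) = SWaux.Phi m α γ q (t k) from rfl,
          SWaux.Phi_scale m α γ q hq0.le (ht k), ← mul_assoc,
          ← ENNReal.ofReal_mul (by positivity), ← Real.rpow_add (ht k),
          show s * q + ((α - γ) * q + (m:ℝ)) = 0 by rw [hsdef, ← hAB]; field_simp; ring,
          Real.rpow_zero, ENNReal.ofReal_one, one_mul]
      have hmeas2 : ∀ k, k ∈ Finset.range n → Measurable fun x : E m =>
          (t k • SWaux.ann m).indicator
            (fun x => (ENNReal.ofReal (t k ^ s) * SWaux.inn m α (t k) x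
              * (ENNReal.ofReal ‖x‖) ^ (-γ)) ^ q) x :=
        fun k _ => Measurable.indicator
          (ENNReal.continuous_rpow_const.measurable.comp
            (((measurable_const.mul (SWaux.inn_meas m α (ht k).ne'))).mul (SWaux.meas_pw (-γ))))
          (SWaux.smul_ann_meas (ht k).ne')
      calc (n : ℝ≥0∞) * SWaux.Phi m α γ q 1
          = ∑ k ∈ Finset.range n, ∫⁻ x, (t k • SWaux.ann m).indicator
              (fun x => (ENNReal.ofReal (t k ^ s) * SWaux.inn m α (t k) x
                * (ENNReal.ofReal ‖x‖) ^ (-γ)) ^ q) x := by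
            simp_rw [hterm]
            rw [Finset.sum_const, Finset.card_range, nsmul_eq_mul]
        _ = ∫⁻ x, ∑ k ∈ Finset.range n, (t k • SWaux.ann m).indicator
              (fun x => (ENNReal.ofReal (t k ^ s) * SWaux.inn m α (t k) x
                * (ENNReal.ofReal ‖x‖) ^ (-γ)) ^ q) x :=
            (lintegral_finset_sum _ hmeas2).symm
        _ ≤ _ := lintegral_mono hstep
    have hmain := hineq f hfmeas
    rw [hRHS] at hmain
    have h7 : ((n:ℝ≥0∞) * SWaux.Phi m α γ q 1) ^ (1/q)
        ≤ N * ((n:ℝ≥0∞) * SWaux.Psi m δ p 1) ^ (1/p) :=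
      le_trans (ENNReal.rpow_le_rpow hLHS hq0') hmain
    rw [ENNReal.mul_rpow_of_nonneg _ _ hq0', ENNReal.mul_rpow_of_nonneg _ _ hp0',
      ← ENNReal.ofReal_natCast n, ENNReal.ofReal_rpow_of_pos hnpos,
      ENNReal.ofReal_rpow_of_pos hnpos, ← mul_assoc,
      mul_comm N (ENNReal.ofReal ((n:ℝ) ^ (1/p))), mul_assoc] at h7
    have h8 := hdiv (n:ℝ) (1/q) (1/p) hnpos h7
    have h9 : ENNReal.ofReal u₀ * P ≤ C := by
      refine le_trans ?_ h8
      apply mul_le_mul' _ le_rfl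
      apply ENNReal.ofReal_le_ofReal
      calc u₀ = (u₀ ^ (1/q - 1/p)⁻¹) ^ (1/q - 1/p) := by
            rw [← Real.rpow_mul hu₀.le, inv_mul_cancel₀ hε.ne', Real.rpow_one]
        _ ≤ (n:ℝ) ^ (1/q - 1/p) :=
            Real.rpow_le_rpow (Real.rpow_pos_of_pos hu₀ _).le hn2 hε.le
    exact hfalse h9
  · -- unbalanced case: pure scaling
    set c : ℝ := u₀ ^ (α - γ + (m:ℝ)/q - (δ + (m:ℝ)/p))⁻¹ with hcdef
    have hc : 0 < c := Real.rpow_pos_of_pos hu₀ _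
    have h5 := hdiv c _ _ hc (key c hc)
    have h6 : c ^ (α - γ + (m:ℝ)/q - (δ + (m:ℝ)/p)) = u₀ := by
      rw [hcdef, ← Real.rpow_mul hu₀.le,
        inv_mul_cancel₀ (sub_ne_zero.mpr hAB), Real.rpow_one]
    rw [h6] at h5
    exact hfalse h5

end
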